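/- For words u, v over an alphabet A, the identity u ≈ v holds in every monoid satisfying x·y = x·y·x if and only if ini(u) = ini(v), where ini(w) is the word obtained from w by retaining only the first occurrence of each letter. -/

import Mathlib

/-- `ini w` is the word obtained from `w` by retaining only the first
occurrence of each letter. -/
def ini {A : Type} [DecidableEq A] : List A → List A
  | [] => []
  | a :: l => a :: ini (l.filter (· ≠ a))
termination_by w => w.length
decreasing_by
  simp only [List.length_cons]
  exact Nat.lt_succ_of_le (by
    first
    | exact (List.length_unattach).le.trans ((List.length_filter_le _ _).trans List.length_attach.le)
    | simpa using List.length_filter_le _ l.attach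
    | simp [List.length_filter_le])

theorem ini_ih_aux {A : Type} [DecidableEq A] (a : A) (l : List A) :
    (List.filter (fun x : {x // x ∈ l} => match x with | ⟨x, _⟩ => decide (x ≠ a)) l.attach).unattach
      = l.filter (· ≠ a) := by
  rw [List.unattach_filter (g := fun x => decide (x ≠ a)) (hf := fun _ _ => rfl), List.unattach_attach]


theorem ini_cons {A : Type} [DecidableEq A] (a : A) (l : List A) :
    ini (a :: l) = a :: ini (l.filter (· ≠ a)) := by rw [ini]

theorem mem_ini {A : Type} [DecidableEq A] (x : A) (l : List A) : x ∈ ini l ↔ x ∈ l := by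
  induction l using ini.induct with
  | case1 => simp [ini]
  | case2 a l ih =>
    rw [ini_ih_aux] at ih
    rw [ini_cons]
    by_cases h : x = a
    · simp [h]
    · simp only [ne_eq, decide_not] at ih ⊢
      simp [h, List.mem_filter] at ih ⊢
      exact ih

theorem nodup_ini {A : Type} [DecidableEq A] (l : List A) : (ini l).Nodup := by
  induction l using ini.induct with
  | case1 => simp [ini]
  | case2 a l ih =>
    rw [ini_ih_aux] at ih
    rw [ini_cons]
    refine List.nodup_cons.2 ⟨fun h => ?_, ih⟩
    have := (mem_ini a _).1 h
    simp [List.mem_filter] at this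

theorem ini_of_nodup {A : Type} [DecidableEq A] (l : List A) (h : l.Nodup) : ini l = l := by
  induction l with
  | nil => simp [ini]
  | cons a l ih =>
    rw [ini_cons, List.filter_eq_self.2, ih h.of_cons]
    intro x hx
    simp only [decide_not, ne_eq, decide_eq_true_eq, Bool.not_eq_true', decide_eq_false_iff_not]
    rintro rfl
    exact (List.nodup_cons.1 h).1 hx

theorem ini_filter {A : Type} [DecidableEq A] (p : A → Bool) (l : List A) :
    ini (l.filter p) = (ini l).filter p := by
  induction l using ini.induct with
  | case1 => simp [ini]
  | case2 a l ih =>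
    rw [ini_ih_aux] at ih
    rw [ini_cons]
    by_cases h : p a
    · rw [List.filter_cons_of_pos h, ini_cons, List.filter_cons_of_pos h, List.filter_comm, ih]
    · rw [List.filter_cons_of_neg h, List.filter_cons_of_neg h, ← ih, List.filter_comm]
      congr 1
      symm
      apply List.filter_eq_self.2
      intro x hx
      have := List.of_mem_filter hx
      simp only [decide_not, ne_eq, Bool.not_eq_true', decide_eq_false_iff_not] at this ⊢
      rintro rfl
      exact h this

theorem ini_append {A : Type} [DecidableEq A] (l m : List A) :
    ini (l ++ m) = ini l ++ ini (m.filter (· ∉ l)) := by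
  induction l using ini.induct generalizing m with
  | case1 => simp [ini, List.filter_eq_self.2]
  | case2 a l ih =>
    rw [ini_ih_aux] at ih
    rw [List.cons_append, ini_cons, List.filter_append, ih, ini_cons, List.cons_append]
    congr 2
    rw [List.filter_filter]
    congr 1
    apply List.filter_congr
    intro x hx
    by_cases hxa : x = a <;> by_cases hxl : x ∈ l <;>
      simp [hxa, hxl, List.mem_filter]

theorem ini_ini {A : Type} [DecidableEq A] (l : List A) : ini (ini l) = ini l :=
  ini_of_nodup _ (nodup_ini l)

theorem ini_append_left {A : Type} [DecidableEq A] (l m : List A) :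
    ini (ini l ++ m) = ini (l ++ m) := by
  rw [ini_append, ini_append, ini_ini]
  congr 2
  apply List.filter_congr
  intro x _
  simp [mem_ini]

theorem ini_append_right {A : Type} [DecidableEq A] (l m : List A) :
    ini (l ++ ini m) = ini (l ++ m) := by
  rw [ini_append, ini_append, ← ini_filter, ini_ini]

theorem ini_append_subset {A : Type} [DecidableEq A] (l m : List A)
    (h : ∀ x ∈ m, x ∈ l) : ini (l ++ m) = ini l := by
  rw [ini_append, List.filter_eq_nil_iff.2]
  · simp [ini]
  · intro x hx
    simp [h x hx]

instance iniMonoid {A : Type} [DecidableEq A] : Monoid {l : List A // l.Nodup} where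
  mul x y := ⟨ini (x.1 ++ y.1), nodup_ini _⟩
  one := ⟨[], List.nodup_nil⟩
  one_mul x := Subtype.ext (by
    show ini ([] ++ x.1) = x.1
    rw [List.nil_append]; exact ini_of_nodup _ x.2)
  mul_one x := Subtype.ext (by
    show ini (x.1 ++ []) = x.1
    rw [List.append_nil]; exact ini_of_nodup _ x.2)
  mul_assoc x y z := Subtype.ext (by
    show ini (ini (x.1 ++ y.1) ++ z.1) = ini (x.1 ++ ini (y.1 ++ z.1))
    rw [ini_append_left, ini_append_right, List.append_assoc])

theorem iniMonoid.law {A : Type} [DecidableEq A] (x y : {l : List A // l.Nodup}) :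
    x * y = x * y * x := by
  apply Subtype.ext
  show ini (x.1 ++ y.1) = ini (ini (x.1 ++ y.1) ++ x.1)
  rw [ini_append_left]
  exact (ini_append_subset _ _ (fun a ha => List.mem_append_left _ ha)).symm

theorem iniMonoid.eval {A : Type} [DecidableEq A] (w : List A) :
    ((w.map (fun a => (⟨[a], List.nodup_singleton a⟩ : {l : List A // l.Nodup}))).prod).1
      = ini w := by
  induction w with
  | nil => simp [ini]; rfl
  | cons a l ih =>
    rw [List.map_cons, List.prod_cons]
    show ini ([a] ++ ((l.map (fun a => (⟨[a], List.nodup_singleton a⟩ : {l : List A // l.Nodup}))).prod).1) = ini (a :: l)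
    rw [ih, ini_append_right]
    rfl

theorem del {A M : Type} [DecidableEq A] [Monoid M] (hM : ∀ x y : M, x * y = x * y * x)
    (f : A → M) (a : A) :
    ∀ (l : List A) (y : M),
      f a * y * ((l.map f).prod) = f a * y * (((l.filter (· ≠ a)).map f).prod) := by
  intro l
  induction l with
  | nil => intro y; rfl
  | cons b l ih =>
    intro y
    by_cases hb : b = a
    · subst hb
      rw [List.filter_cons_of_neg (by simp)]
      calc f b * y * ((List.map f (b :: l)).prod)
          = (f b * y * f b) * (l.map f).prod := by
            simp only [List.map_cons, List.prod_cons, mul_assoc]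
        _ = (f b * y) * (l.map f).prod := by rw [← hM (f b) y]
        _ = f b * y * (((l.filter (· ≠ b)).map f).prod) := ih y
    · rw [List.filter_cons_of_pos (by simp [hb])]
      have h1 := ih (y * f b)
      simp only [List.map_cons, List.prod_cons, ← mul_assoc] at h1 ⊢
      exact h1

theorem prod_ini {A M : Type} [DecidableEq A] [Monoid M] (hM : ∀ x y : M, x * y = x * y * x)
    (f : A → M) : ∀ w : List A, ((w.map f).prod) = (((ini w).map f).prod) := by
  intro w
  induction w using ini.induct with
  | case1 => simp [ini]
  | case2 a l ih =>
    rw [ini_ih_aux] at ih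
    rw [ini_cons]
    simp only [List.map_cons, List.prod_cons, ← ih]
    have := del hM f a l 1
    simpa using this

theorem stmt2 {A : Type} [DecidableEq A] (u v : List A) :
    (∀ (M : Type) [Monoid M], (∀ x y : M, x * y = x * y * x) →
      ∀ f : A → M, (u.map f).prod = (v.map f).prod) ↔ ini u = ini v := by
  constructor
  · intro h
    have := h {l : List A // l.Nodup} iniMonoid.law
      (fun a => ⟨[a], List.nodup_singleton a⟩)
    have h2 := congrArg Subtype.val this
    rwa [iniMonoid.eval u, iniMonoid.eval v] at h2
  · intro h M _ hM f
    rw [prod_ini hM f u, prod_ini hM f v, h]
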